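/- Let n ≥ 1, let c ∈ ℝ^n be a cost vector, and let C ⊆ ℝ_{≥0}^n be a nonempty polytope of nonnegative vectors (e.g. a transport polytope defined by marginal constraints) containing at least one strictly positive point. For ε > 0, let γ^ε be the unique minimizer over γ ∈ C of ∑_j c_j γ_j + ε ∑_j γ_j log γ_j. Then as ε → 0⁺, γ^ε converges to γ*, where γ* is the unique minimizer of the entropy ∑_j γ_j log γ_j over the set of solutions of the linear program min_{γ ∈ C} ∑_j c_j γ_j. -/

import Mathlib

open Filter Topology

/-- For a cost vector `c` and a nonempty polytope `C` of nonnegative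
vectors containing a strictly positive point, the minimizers `γ^ε` of the entropically
regularized problem converge, as `ε → 0⁺`, to the unique minimizer `γ*` of the entropy
over the set `F` of solutions of the linear program `min_{γ ∈ C} ⟨c, γ⟩`. -/
theorem entropic_regularization_converges
    (n : ℕ) (hn : 1 ≤ n) (c : Fin n → ℝ)
    (C : Set (Fin n → ℝ)) (s : Finset (Fin n → ℝ))
    (hCs : C = convexHull ℝ (s : Set (Fin n → ℝ)))
    (hCne : C.Nonempty)
    (hCnonneg : C ⊆ {γ | ∀ j, 0 ≤ γ j})
    (hCpos : ∃ γ0 ∈ C, ∀ j, 0 < γ0 j)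
    (Ent : (Fin n → ℝ) → ℝ)
    (hEnt : Ent = fun γ => ∑ j, γ j * Real.log (γ j))
    (γeps : ℝ → (Fin n → ℝ))
    (hγeps : ∀ ε : ℝ, 0 < ε → γeps ε ∈ C ∧ ∀ γ ∈ C,
      (∑ j, c j * γeps ε j) + ε * Ent (γeps ε) ≤ (∑ j, c j * γ j) + ε * Ent γ)
    (F : Set (Fin n → ℝ))
    (hF : F = {γ ∈ C | ∀ γ' ∈ C, ∑ j, c j * γ j ≤ ∑ j, c j * γ' j}) :
    ∃ γstar ∈ F,
      (∀ γ ∈ F, Ent γstar ≤ Ent γ) ∧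
      (∀ γ ∈ F, Ent γ ≤ Ent γstar → γ = γstar) ∧
      Filter.Tendsto γeps (nhdsWithin 0 (Set.Ioi 0)) (nhds γstar) := by
  classical
  set L : (Fin n → ℝ) → ℝ := fun γ => ∑ j, c j * γ j with hL
  -- basic facts about C
  have hCcompact : IsCompact C := by
    rw [hCs]; exact s.finite_toSet.isCompact_convexHull ℝ
  have hCconv : Convex ℝ C := by rw [hCs]; exact convex_convexHull ℝ _
  have hLcont : Continuous L :=
    continuous_finset_sum _ fun j _ => continuous_const.mul (continuous_apply j)
  have hEntCont : Continuous Ent := by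
    rw [hEnt]
    exact continuous_finset_sum _ fun j _ =>
      Real.continuous_mul_log.comp (continuous_apply j)
  -- linear-program minimizer
  obtain ⟨γ1, hγ1C, hγ1min⟩ := hCcompact.exists_isMinOn hCne hLcont.continuousOn
  have hγ1F : γ1 ∈ F := by
    rw [hF]; exact ⟨hγ1C, fun γ' hγ' => hγ1min hγ'⟩
  have hLlin : ∀ (a b : ℝ) (x y : Fin n → ℝ), L (a • x + b • y) = a * L x + b * L y := by
    intro a b x y
    simp only [hL, Finset.mul_sum]
    rw [← Finset.sum_add_distrib]
    refine Finset.sum_congr rfl fun j _ => ?_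
    simp only [Pi.add_apply, Pi.smul_apply, smul_eq_mul]
    ring
  have hFeq : F = C ∩ {γ | L γ ≤ L γ1} := by
    rw [hF]
    ext γ
    constructor
    · rintro ⟨hγC, hγmin⟩; exact ⟨hγC, hγmin γ1 hγ1C⟩
    · rintro ⟨hγC, hγle⟩
      exact ⟨hγC, fun γ' hγ' => le_trans hγle (hγ1min hγ')⟩
  have hFcompact : IsCompact F := by
    rw [hFeq]
    exact hCcompact.inter_right (isClosed_le hLcont continuous_const)
  have hFconv : Convex ℝ F := by
    rw [hFeq]
    refine hCconv.inter ?_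
    intro x hx y hy a b ha hb hab
    simp only [Set.mem_setOf_eq] at *
    calc L (a • x + b • y) = a * L x + b * L y := hLlin a b x y
      _ ≤ a * L γ1 + b * L γ1 := by gcongr
      _ = L γ1 := by rw [← add_mul, hab, one_mul]
  have hFsubC : F ⊆ C := by rw [hFeq]; exact Set.inter_subset_left
  -- entropy minimizer on F
  obtain ⟨γstar, hγsF, hγsmin⟩ :=
    hFcompact.exists_isMinOn ⟨γ1, hγ1F⟩ hEntCont.continuousOn
  -- uniqueness of the entropy minimizer via strict convexity
  have huniq : ∀ γ ∈ F, Ent γ ≤ Ent γstar → γ = γstar := by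
    intro γ hγF hle
    by_contra hne
    have hmid : (1/2 : ℝ) • γ + (1/2 : ℝ) • γstar ∈ F :=
      hFconv hγF hγsF (by norm_num) (by norm_num) (by norm_num)
    have hstrict : Ent ((1/2:ℝ) • γ + (1/2:ℝ) • γstar)
        < (1/2) * Ent γ + (1/2) * Ent γstar := by
      rw [hEnt]
      simp only
      obtain ⟨j0, hj0⟩ : ∃ j, γ j ≠ γstar j := by
        by_contra h; push_neg at h; exact hne (funext h)
      rw [Finset.mul_sum, Finset.mul_sum, ← Finset.sum_add_distrib]
      refine Finset.sum_lt_sum (fun j _ => ?_) ⟨j0, Finset.mem_univ j0, ?_⟩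
      · have hx : γ j ∈ Set.Ici (0:ℝ) := hCnonneg (hFsubC hγF) j
        have hy : γstar j ∈ Set.Ici (0:ℝ) := hCnonneg (hFsubC hγsF) j
        have := Real.convexOn_mul_log.2 hx hy (by norm_num : (0:ℝ) ≤ 1/2)
          (by norm_num : (0:ℝ) ≤ 1/2) (by norm_num)
        simpa [Pi.add_apply, Pi.smul_apply, smul_eq_mul] using this
      · have hx : γ j0 ∈ Set.Ici (0:ℝ) := hCnonneg (hFsubC hγF) j0
        have hy : γstar j0 ∈ Set.Ici (0:ℝ) := hCnonneg (hFsubC hγsF) j0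
        have := Real.strictConvexOn_mul_log.2 hx hy hj0 (by norm_num : (0:ℝ) < 1/2)
          (by norm_num : (0:ℝ) < 1/2) (by norm_num)
        simpa [Pi.add_apply, Pi.smul_apply, smul_eq_mul] using this
    have hmin := hγsmin hmid
    simp only [Set.mem_setOf_eq] at hmin
    linarith
  -- entropy lower bound on C
  obtain ⟨γ2, hγ2C, hγ2min⟩ := hCcompact.exists_isMinOn hCne hEntCont.continuousOn
  -- key inequalities for the regularized minimizers
  have hkey : ∀ ε : ℝ, 0 < ε →
      L (γeps ε) ≤ L γstar + ε * (Ent γstar - Ent γ2) ∧ Ent (γeps ε) ≤ Ent γstar := by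
    intro ε hε
    obtain ⟨hmem, hmin⟩ := hγeps ε hε
    have h1 : L (γeps ε) + ε * Ent (γeps ε) ≤ L γstar + ε * Ent γstar :=
      hmin γstar (hFsubC hγsF)
    have h2 : L γstar ≤ L (γeps ε) := by
      rw [hF] at hγsF; exact hγsF.2 _ hmem
    have hEntle : Ent (γeps ε) ≤ Ent γstar := by nlinarith
    have hγ2le : Ent γ2 ≤ Ent (γeps ε) := hγ2min hmem
    refine ⟨?_, hEntle⟩
    nlinarith [mul_le_mul_of_nonneg_left hγ2le hε.le]
  -- convergence
  have hconv : Filter.Tendsto γeps (nhdsWithin 0 (Set.Ioi 0)) (nhds γstar) := by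
    by_contra hcon
    rw [Metric.tendsto_nhds] at hcon
    push_neg at hcon
    obtain ⟨δ, hδ, hfreq⟩ := hcon
    obtain ⟨t, ht_tendsto, ht⟩ := Filter.exists_seq_forall_of_frequently hfreq
    have htpos : ∀ᶠ k in Filter.atTop, t k ∈ Set.Ioi (0:ℝ) :=
      ht_tendsto self_mem_nhdsWithin
    obtain ⟨k0, hk0⟩ := Filter.eventually_atTop.mp htpos
    set u : ℕ → ℝ := fun k => t (k + k0) with hu
    have hupos : ∀ k, 0 < u k := fun k => hk0 (k + k0) (Nat.le_add_left _ _)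
    have hu0 : Filter.Tendsto u Filter.atTop (nhds 0) :=
      (ht_tendsto.mono_right nhdsWithin_le_nhds).comp (Filter.tendsto_add_atTop_nat k0)
    have humem : ∀ k, γeps (u k) ∈ C := fun k => (hγeps _ (hupos k)).1
    obtain ⟨a, haC, φ, hφ, hconv2⟩ := hCcompact.tendsto_subseq humem
    have huφ0 : Filter.Tendsto (fun k => u (φ k)) Filter.atTop (nhds 0) :=
      hu0.comp hφ.tendsto_atTop
    have hLa : L a ≤ L γstar := by
      have hla : Filter.Tendsto (fun k => L (γeps (u (φ k)))) Filter.atTop (nhds (L a)) :=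
        (hLcont.tendsto a).comp hconv2
      have hrb : Filter.Tendsto (fun k => L γstar + u (φ k) * (Ent γstar - Ent γ2))
          Filter.atTop (nhds (L γstar + 0 * (Ent γstar - Ent γ2))) :=
        tendsto_const_nhds.add (huφ0.mul tendsto_const_nhds)
      have := le_of_tendsto_of_tendsto' hla hrb
        (fun k => (hkey _ (hupos (φ k))).1)
      simpa using this
    have hEnta : Ent a ≤ Ent γstar :=
      le_of_tendsto ((hEntCont.tendsto a).comp hconv2)
        (Filter.Eventually.of_forall fun k => (hkey _ (hupos (φ k))).2)
    have haF : a ∈ F := by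
      rw [hFeq]
      refine ⟨haC, ?_⟩
      have : L γstar ≤ L γ1 := by
        rw [hFeq] at hγsF; exact hγsF.2
      exact le_trans hLa this
    have haeq : a = γstar := huniq a haF hEnta
    have hdist : δ ≤ dist a γstar := by
      have hd : Filter.Tendsto (fun k => dist (γeps (u (φ k))) γstar) Filter.atTop
          (nhds (dist a γstar)) := hconv2.dist tendsto_const_nhds
      exact ge_of_tendsto hd (Filter.Eventually.of_forall fun k =>
        ht (φ k + k0))
    rw [haeq] at hdist
    simp at hdist
    linarith
  exact ⟨γstar, hγsF, fun γ hγ => hγsmin hγ, huniq, hconv⟩
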